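/- For λ = (m−2)/2 with m even, m ≥ 2, and for all positive reals s, t, one has (∂_s − (s/t)∂_t)^λ cos(t) = √(π/2) · Σ_{ℓ=0}^{⌊λ/2⌋} s^{λ−2ℓ} · (1/(2^ℓ ℓ!)) · (Γ(λ+1)/Γ(λ+1−2ℓ)) · J_{λ−1/2−ℓ}(t)/t^{λ−1/2−ℓ}. -/

import Mathlib

/-- The Bessel function of the first kind of order `ν`. -/
noncomputable def besselJ (ν t : ℝ) : ℝ :=
  ∑' n : ℕ, ((-1 : ℝ) ^ n / ((Nat.factorial n : ℝ) * Real.Gamma ((n : ℝ) + ν + 1))) *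
    (t / 2) ^ ((2 * (n : ℝ)) + ν)

/-- The first-order differential operator `∂_s − (s/t)∂_t` on functions of `(s,t)`. -/
noncomputable def dop (f : ℝ → ℝ → ℝ) : ℝ → ℝ → ℝ :=
  fun s t => deriv (fun u => f u t) s - (s / t) * deriv (fun u => f s u) t

open Real

noncomputable def aa (ν : ℝ) (n : ℕ) : ℝ :=
  (-1 : ℝ) ^ n / ((n.factorial : ℝ) * Real.Gamma ((n : ℝ) + ν + 1) * 4 ^ n)

noncomputable def hh (ν x : ℝ) : ℝ := ∑' n : ℕ, aa ν n * x ^ n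

lemma gamma_lb {ν : ℝ} (hν : -(1/2) ≤ ν) (n : ℕ) :
    Real.Gamma (ν + 1) * n.factorial / 2 ^ n ≤ Real.Gamma ((n : ℝ) + ν + 1) := by
  induction n with
  | zero => simp
  | succ n ih =>
    have hpos : (0:ℝ) < (n : ℝ) + ν + 1 := by
      have : (0:ℝ) ≤ (n:ℝ) := Nat.cast_nonneg n
      linarith
    have key : Real.Gamma (((n + 1 : ℕ) : ℝ) + ν + 1) = ((n:ℝ) + ν + 1) * Real.Gamma ((n:ℝ) + ν + 1) := by
      have : (((n + 1 : ℕ) : ℝ) + ν + 1) = ((n:ℝ) + ν + 1) + 1 := by push_cast; ring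
      rw [this, Real.Gamma_add_one hpos.ne']
    rw [key]
    have hg0 : 0 < Real.Gamma (ν + 1) := Real.Gamma_pos_of_pos (by linarith)
    have h2 : ((n:ℝ) + 1) / 2 ≤ (n:ℝ) + ν + 1 := by linarith
    have hnn : (0:ℝ) ≤ Real.Gamma (ν+1) * n.factorial / 2 ^ n := by positivity
    calc Real.Gamma (ν + 1) * (n+1).factorial / 2 ^ (n+1)
        = (((n:ℝ)+1)/2) * (Real.Gamma (ν + 1) * n.factorial / 2 ^ n) := by
          rw [Nat.factorial_succ]; push_cast; ring
      _ ≤ ((n:ℝ) + ν + 1) * (Real.Gamma (ν + 1) * n.factorial / 2 ^ n) := by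
          apply mul_le_mul_of_nonneg_right h2 hnn
      _ ≤ ((n:ℝ) + ν + 1) * Real.Gamma ((n:ℝ) + ν + 1) := by
          apply mul_le_mul_of_nonneg_left ih hpos.le

lemma aa_abs_le {ν : ℝ} (hν : -(1/2) ≤ ν) (n : ℕ) :
    |aa ν n| ≤ 1 / (Real.Gamma (ν + 1) * n.factorial * 2 ^ n) := by
  have hg0 : 0 < Real.Gamma (ν + 1) := Real.Gamma_pos_of_pos (by linarith)
  have hpos : (0:ℝ) < (n : ℝ) + ν + 1 := by
    have : (0:ℝ) ≤ (n:ℝ) := Nat.cast_nonneg n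
    linarith
  have hGpos : 0 < Real.Gamma ((n:ℝ) + ν + 1) := Real.Gamma_pos_of_pos hpos
  have hfac : (1:ℝ) ≤ n.factorial := by exact_mod_cast Nat.one_le_iff_ne_zero.mpr n.factorial_ne_zero
  have h1 : |aa ν n| = 1 / ((n.factorial : ℝ) * Real.Gamma ((n:ℝ) + ν + 1) * 4 ^ n) := by
    rw [aa, abs_div, abs_pow, abs_neg, abs_one, one_pow]
    congr 1
    rw [abs_of_pos (by positivity)]
  rw [h1]
  apply one_div_le_one_div_of_le (by positivity)
  -- goal: Γ(ν+1) * n! * 2^n ≤ n! * Γ(n+ν+1) * 4^n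
  have h2 := gamma_lb hν n
  have h3 : Real.Gamma (ν+1) * n.factorial ≤ Real.Gamma ((n:ℝ)+ν+1) * 2^n := by
    rw [div_le_iff₀ (by positivity)] at h2
    linarith
  calc Real.Gamma (ν+1) * (n.factorial:ℝ) * 2^n
      ≤ (Real.Gamma ((n:ℝ)+ν+1) * 2^n) * 2^n := by
        apply mul_le_mul_of_nonneg_right h3 (by positivity)
    _ = Real.Gamma ((n:ℝ)+ν+1) * 4^n := by
        rw [show (4:ℝ) = 2*2 by norm_num, mul_pow]; ring
    _ ≤ (n.factorial:ℝ) * Real.Gamma ((n:ℝ)+ν+1) * 4^n := by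
        nlinarith [mul_pos hGpos (pow_pos (show (0:ℝ) < 4 by norm_num) n), hfac]

lemma summable_u {ν R : ℝ} (hν : -(1/2) ≤ ν) (hR : 1 ≤ R) :
    Summable (fun n : ℕ => |aa ν n| * ((n:ℝ) + 1) * R ^ n) := by
  have hg0 : 0 < Real.Gamma (ν + 1) := Real.Gamma_pos_of_pos (by linarith)
  apply Summable.of_nonneg_of_le (fun n => by positivity) (fun n => ?_)
    ((Real.summable_pow_div_factorial R).mul_left (1 / Real.Gamma (ν + 1)))
  have h1 := aa_abs_le hν n
  have hfac : (1:ℝ) ≤ n.factorial := by exact_mod_cast Nat.one_le_iff_ne_zero.mpr n.factorial_ne_zero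
  have h2 : ((n:ℝ) + 1) ≤ 2 ^ n := by
    have hn : n + 1 ≤ 2 ^ n := Nat.lt_two_pow_self
    exact_mod_cast hn
  calc |aa ν n| * ((n:ℝ) + 1) * R ^ n
      ≤ (1 / (Real.Gamma (ν + 1) * n.factorial * 2 ^ n)) * (2^n) * R ^ n := by
        apply mul_le_mul_of_nonneg_right _ (by positivity)
        apply mul_le_mul h1 h2 (by positivity) (by positivity)
    _ = 1 / Real.Gamma (ν + 1) * (R ^ n / n.factorial) := by
        field_simp

lemma aa_succ (ν : ℝ) (n : ℕ) :
    aa ν (n + 1) * ((n:ℝ) + 1) = -(aa (ν + 1) n) / 4 := by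
  have harg : ((n + 1 : ℕ) : ℝ) + ν + 1 = (n : ℝ) + (ν + 1) + 1 := by push_cast; ring
  rw [aa, aa, harg]
  set G := Real.Gamma ((n : ℝ) + (ν + 1) + 1) with hG
  rcases eq_or_ne G 0 with h | h
  · simp [h]
  · have hfac : ((n+1).factorial : ℝ) = ((n:ℝ) + 1) * n.factorial := by
      rw [Nat.factorial_succ]; push_cast; ring
    rw [hfac]
    have h1 : ((n:ℝ) + 1) ≠ 0 := by positivity
    have h2 : ((n.factorial : ℝ)) ≠ 0 := by exact_mod_cast n.factorial_ne_zero
    field_simp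
    ring

lemma bound_aux {R x : ℝ} (hR : 1 ≤ R) (hx : |x| ≤ R) (c : ℝ) (n : ℕ) :
    |c * ((n:ℝ) * x ^ (n - 1))| ≤ |c| * ((n:ℝ) + 1) * R ^ n := by
  rw [abs_mul, abs_mul, abs_pow]
  have h0 : (0:ℝ) ≤ |x| := abs_nonneg x
  have hRpos : (0:ℝ) < R := by linarith
  have h1 : |x| ^ (n-1) ≤ R ^ (n-1) := pow_le_pow_left₀ h0 hx _
  have h2 : R ^ (n-1) ≤ R ^ n := pow_le_pow_right₀ hR (Nat.sub_le n 1)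
  have h3 : |(n:ℝ)| = (n:ℝ) := abs_of_nonneg (Nat.cast_nonneg n)
  rw [h3]
  calc |c| * ((n:ℝ) * |x| ^ (n-1)) ≤ |c| * (((n:ℝ)+1) * R ^ n) := by
        apply mul_le_mul_of_nonneg_left _ (abs_nonneg c)
        apply mul_le_mul (by linarith) (le_trans h1 h2) (by positivity) (by positivity)
    _ = |c| * ((n:ℝ)+1) * R ^ n := by ring

lemma summable_hh {ν : ℝ} (hν : -(1/2) ≤ ν) (x : ℝ) :
    Summable (fun n : ℕ => aa ν n * x ^ n) := by
  set R := |x| + 1 with hR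
  have hR1 : 1 ≤ R := by rw [hR]; linarith [abs_nonneg x]
  apply Summable.of_norm
  apply Summable.of_nonneg_of_le (fun n => norm_nonneg _) (fun n => ?_) (summable_u hν hR1)
  rw [Real.norm_eq_abs, abs_mul, abs_pow]
  have h1 : |x| ^ n ≤ R ^ n := pow_le_pow_left₀ (abs_nonneg x) (by simp [hR]) n
  calc |aa ν n| * |x| ^ n ≤ |aa ν n| * R ^ n := by
        apply mul_le_mul_of_nonneg_left h1 (abs_nonneg _)
    _ ≤ |aa ν n| * ((n:ℝ)+1) * R ^ n := by
        nlinarith [mul_nonneg (mul_nonneg (Nat.cast_nonneg n : (0:ℝ) ≤ (n:ℝ)) (abs_nonneg (aa ν n))) (pow_nonneg (show (0:ℝ) ≤ R by linarith) n)]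

lemma hasDerivAt_hh {ν : ℝ} (hν : -(1/2) ≤ ν) (x : ℝ) :
    HasDerivAt (hh ν) (-(hh (ν + 1) x) / 4) x := by
  set R := |x| + 1 with hR
  have hR1 : 1 ≤ R := by rw [hR]; linarith [abs_nonneg x]
  have hmem : x ∈ Set.Ioo (-R) R := by
    simp only [Set.mem_Ioo, hR]
    constructor <;> linarith [neg_abs_le x, le_abs_self x]
  have h0mem : (0:ℝ) ∈ Set.Ioo (-R) R := by
    simp only [Set.mem_Ioo, hR]
    constructor <;> linarith [abs_nonneg x]
  have key : HasDerivAt (fun z => ∑' n : ℕ, aa ν n * z ^ n)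
      (∑' n : ℕ, aa ν n * ((n:ℝ) * x ^ (n - 1))) x := by
    refine hasDerivAt_tsum_of_isPreconnected (summable_u hν hR1) isOpen_Ioo
      (convex_Ioo _ _).isPreconnected
      (fun n y hy => ((hasDerivAt_pow n y).const_mul (aa ν n)))
      (fun n y hy => ?_) h0mem (summable_hh hν 0) hmem
    rw [Real.norm_eq_abs]
    exact bound_aux hR1 (by rcases hy with ⟨h1, h2⟩; rw [abs_le]; constructor <;> linarith) _ n
  have heq : (∑' n : ℕ, aa ν n * ((n:ℝ) * x ^ (n - 1))) = -(hh (ν + 1) x) / 4 := by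
    have hsum : Summable (fun n : ℕ => aa ν n * ((n:ℝ) * x ^ (n - 1))) := by
      apply Summable.of_norm
      apply Summable.of_nonneg_of_le (fun n => norm_nonneg _) (fun n => ?_) (summable_u hν hR1)
      rw [Real.norm_eq_abs]
      exact bound_aux hR1 (by rw [hR]; linarith [abs_nonneg x]) _ n
    rw [hsum.tsum_eq_zero_add]
    simp only [Nat.cast_zero, zero_mul, mul_zero, zero_add]
    have : ∀ n : ℕ, aa ν (n+1) * (((n+1:ℕ):ℝ) * x ^ ((n+1) - 1)) = -(1/4) * (aa (ν+1) n * x ^ n) := by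
      intro n
      have h4 := aa_succ ν n
      simp only [Nat.add_sub_cancel]
      push_cast
      calc aa ν (n+1) * (((n:ℝ)+1) * x ^ n) = (aa ν (n+1) * ((n:ℝ)+1)) * x ^ n := by ring
        _ = (-(aa (ν+1) n) / 4) * x ^ n := by rw [h4]
        _ = -(1/4) * (aa (ν+1) n * x ^ n) := by ring
    calc (∑' n : ℕ, aa ν (n+1) * (((n+1:ℕ):ℝ) * x ^ ((n+1) - 1)))
        = ∑' n : ℕ, -(1/4) * (aa (ν+1) n * x ^ n) := by
          apply tsum_congr; intro n; exact this n
      _ = -(1/4) * ∑' n : ℕ, (aa (ν+1) n * x ^ n) := by rw [tsum_mul_left]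
      _ = -(hh (ν+1) x) / 4 := by rw [hh]; ring
  rw [← heq]
  exact key

noncomputable def gb (ν t : ℝ) : ℝ := besselJ ν t / t ^ ν

lemma gb_eq (ν : ℝ) {t : ℝ} (ht : 0 < t) : gb ν t = hh ν (t ^ 2) / (2:ℝ) ^ ν := by
  have ht2 : (0:ℝ) < t / 2 := by linarith
  have key : besselJ ν t = (t ^ ν / (2:ℝ) ^ ν) * hh ν (t ^ 2) := by
    rw [besselJ, hh, ← tsum_mul_left]
    apply tsum_congr
    intro n
    have e1 : (t / 2) ^ ((2 * (n : ℝ)) + ν) = (t/2) ^ (((2*n : ℕ)):ℝ) * (t/2) ^ ν := by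
      rw [← Real.rpow_add ht2]
      congr 1
      push_cast; ring
    rw [e1, Real.rpow_natCast, Real.div_rpow ht.le (by norm_num : (0:ℝ) ≤ 2)]
    have e2 : (t/2) ^ (2*n) = (t^2) ^ n / 4 ^ n := by
      rw [div_pow, pow_mul]
      congr 1
      rw [pow_mul]
      norm_num
    rw [e2, aa]
    field_simp
  rw [gb, key]
  have htν : t ^ ν ≠ 0 := (Real.rpow_pos_of_pos ht ν).ne'
  field_simp

lemma hasDerivAt_gb {ν : ℝ} (hν : -(1/2) ≤ ν) {t : ℝ} (ht : 0 < t) :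
    HasDerivAt (gb ν) (-t * gb (ν + 1) t) t := by
  have h2 : ((2:ℝ) ^ (ν+1)) = (2:ℝ)^ν * 2 := by
    rw [Real.rpow_add (by norm_num : (0:ℝ) < 2), Real.rpow_one]
  have hφ : HasDerivAt (fun u : ℝ => hh ν (u ^ 2) / (2:ℝ) ^ ν)
      (-t * (hh (ν+1) (t^2) / (2:ℝ)^(ν+1))) t := by
    have hc : HasDerivAt (fun u : ℝ => hh ν (u ^ 2))
        ((-(hh (ν + 1) (t^2)) / 4) * (2 * t ^ 1)) t := by
      have := (hasDerivAt_hh hν (t^2)).comp t ((hasDerivAt_pow 2 t).congr_deriv (by norm_num : _ = (2:ℝ) * t ^ 1))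
      exact this
    have := hc.div_const ((2:ℝ)^ν)
    refine this.congr_deriv ?_
    rw [h2]
    have h2ν : ((2:ℝ)^ν) ≠ 0 := (Real.rpow_pos_of_pos (by norm_num) ν).ne'
    field_simp
    ring
  have heq : gb ν =ᶠ[nhds t] (fun u : ℝ => hh ν (u ^ 2) / (2:ℝ) ^ ν) := by
    filter_upwards [isOpen_Ioi.mem_nhds ht] with u hu
    exact gb_eq ν hu
  have := hφ.congr_of_eventuallyEq heq
  refine this.congr_deriv ?_
  rw [gb_eq (ν+1) ht]

lemma gamma_half (n : ℕ) :
    Real.Gamma ((n:ℝ) + 1/2) = Real.sqrt π * (2*n).factorial / (4^n * n.factorial) := by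
  induction n with
  | zero =>
    have e : ((0:ℕ):ℝ) + 1/2 = 1/2 := by norm_num
    rw [e, Real.Gamma_one_half_eq]
    simp
  | succ n ih =>
    have harg : ((n+1:ℕ):ℝ) + 1/2 = ((n:ℝ) + 1/2) + 1 := by push_cast; ring
    rw [harg, Real.Gamma_add_one (by positivity), ih]
    have e1 : (2*(n+1)).factorial = (2*n+2) * ((2*n+1) * (2*n).factorial) := by
      have : 2*(n+1) = (2*n+1) + 1 := by ring
      rw [this, Nat.factorial_succ, Nat.factorial_succ]
    rw [e1, Nat.factorial_succ]
    have h4 : ((4:ℝ)^n) ≠ 0 := by positivity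
    have hf : ((n.factorial:ℝ)) ≠ 0 := by exact_mod_cast n.factorial_ne_zero
    push_cast
    field_simp
    ring

lemma cos_eq_gb {t : ℝ} (ht : 0 < t) :
    Real.cos t = Real.sqrt (π/2) * gb (-(1/2)) t := by
  rw [gb_eq _ ht]
  have h2 : ((2:ℝ) ^ (-(1/2):ℝ)) = 1 / Real.sqrt 2 := by
    rw [Real.rpow_neg (by norm_num), ← Real.sqrt_eq_rpow, one_div]
  have hsqrt2 : Real.sqrt 2 ≠ 0 := by positivity
  have hconst : Real.sqrt (π/2) / ((2:ℝ) ^ (-(1/2):ℝ)) = Real.sqrt π := by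
    rw [h2, div_div_eq_mul_div, div_one, ← Real.sqrt_mul (by positivity : (0:ℝ) ≤ π/2)]
    norm_num
  have key : Real.sqrt (π/2) * (hh (-(1/2)) (t^2) / (2:ℝ)^(-(1/2):ℝ))
      = Real.sqrt π * hh (-(1/2)) (t^2) := by
    rw [← hconst]; ring
  rw [key, hh, ← tsum_mul_left]
  rw [Real.cos_eq_tsum]
  apply tsum_congr
  intro n
  have harg : (n:ℝ) + (-(1/2)) + 1 = (n:ℝ) + 1/2 := by ring
  rw [aa, harg, gamma_half n]
  have hπ : Real.sqrt π ≠ 0 := by positivity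
  have h4 : ((4:ℝ)^n) ≠ 0 := by positivity
  have hf : ((n.factorial:ℝ)) ≠ 0 := by exact_mod_cast n.factorial_ne_zero
  have hf2 : (((2*n).factorial:ℝ)) ≠ 0 := by exact_mod_cast (2*n).factorial_ne_zero
  rw [← pow_mul]
  field_simp

noncomputable def bb (lam ℓ : ℕ) : ℝ :=
  if 2*ℓ ≤ lam then (lam.factorial : ℝ) / (2^ℓ * ℓ.factorial * (lam - 2*ℓ).factorial) else 0

lemma bb_zero (lam : ℕ) : bb lam 0 = 1 := by
  have h : ((lam.factorial:ℝ)) ≠ 0 := by exact_mod_cast lam.factorial_ne_zero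
  simp [bb, h]

lemma bb_big {lam ℓ : ℕ} (h : lam < 2*ℓ) : bb lam ℓ = 0 := by
  simp [bb, Nat.not_le.mpr h]

lemma bb_succ (lam ℓ : ℕ) :
    bb (lam+1) (ℓ+1) = bb lam (ℓ+1) + ((lam - 2*ℓ : ℕ) : ℝ) * bb lam ℓ := by
  rcases Nat.lt_or_ge lam (2*ℓ) with h | h
  · have h3 : lam - 2*ℓ = 0 := by omega
    have hb1 : bb (lam+1) (ℓ+1) = 0 := bb_big (by omega)
    have hb2 : bb lam (ℓ+1) = 0 := bb_big (by omega)
    rw [hb1, hb2, bb_big h, h3]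
    simp
  rcases Nat.lt_or_ge lam (2*ℓ+1) with h1 | h1
  · -- lam = 2ℓ
    have hl : lam = 2*ℓ := by omega
    subst hl
    have hb1 : bb (2*ℓ+1) (ℓ+1) = 0 := bb_big (by omega)
    have hb2 : bb (2*ℓ) (ℓ+1) = 0 := bb_big (by omega)
    rw [hb1, hb2, Nat.sub_self]
    simp
  rcases Nat.lt_or_ge lam (2*ℓ+2) with h2 | h2
  · -- lam = 2ℓ+1
    have hl : lam = 2*ℓ+1 := by omega
    subst hl
    have hb2 : bb (2*ℓ+1) (ℓ+1) = 0 := bb_big (by omega)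
    rw [hb2]
    rw [bb, bb, if_pos (by omega : 2*(ℓ+1) ≤ 2*ℓ+1+1), if_pos (by omega : 2*ℓ ≤ 2*ℓ+1)]
    have e1 : 2*ℓ+1+1 - 2*(ℓ+1) = 0 := by omega
    have e2 : 2*ℓ+1 - 2*ℓ = 1 := by omega
    rw [e1, e2]
    have e3 : (2*ℓ+1+1).factorial = (2*ℓ+2) * (2*ℓ+1).factorial := by
      rw [show 2*ℓ+1+1 = (2*ℓ+1)+1 by ring, Nat.factorial_succ]
    rw [e3, Nat.factorial_succ ℓ]
    have hf : ((ℓ.factorial:ℝ)) ≠ 0 := by exact_mod_cast ℓ.factorial_ne_zero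
    have h2p : ((2:ℝ)^ℓ) ≠ 0 := by positivity
    push_cast
    field_simp
    ring
  · -- lam ≥ 2ℓ+2
    obtain ⟨k, hk⟩ : ∃ k, lam = 2*ℓ+2+k := ⟨lam - (2*ℓ+2), by omega⟩
    subst hk
    rw [bb, bb, bb, if_pos (by omega : 2*(ℓ+1) ≤ 2*ℓ+2+k+1), if_pos (by omega : 2*(ℓ+1) ≤ 2*ℓ+2+k), if_pos (by omega : 2*ℓ ≤ 2*ℓ+2+k)]
    have e1 : 2*ℓ+2+k+1 - 2*(ℓ+1) = k+1 := by omega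
    have e2 : 2*ℓ+2+k - 2*(ℓ+1) = k := by omega
    have e3 : 2*ℓ+2+k - 2*ℓ = k+2 := by omega
    rw [e1, e2, e3]
    have e4 : (2*ℓ+2+k+1).factorial = (2*ℓ+2+k+1) * (2*ℓ+2+k).factorial := Nat.factorial_succ _
    have e5 : (k+2).factorial = (k+2) * ((k+1) * k.factorial) := by
      rw [Nat.factorial_succ, Nat.factorial_succ]
    have e6 : (k+1).factorial = (k+1) * k.factorial := Nat.factorial_succ _
    rw [e4, e5, e6, Nat.factorial_succ ℓ]
    have hf : ((ℓ.factorial:ℝ)) ≠ 0 := by exact_mod_cast ℓ.factorial_ne_zero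
    have hk : ((k.factorial:ℝ)) ≠ 0 := by exact_mod_cast k.factorial_ne_zero
    have h2p : ((2:ℝ)^ℓ) ≠ 0 := by positivity
    push_cast
    field_simp
    ring

noncomputable def FF (lam : ℕ) (s t : ℝ) : ℝ :=
  Real.sqrt (π/2) * ∑ ℓ ∈ Finset.range (lam+1),
    s ^ (lam - 2*ℓ) * (bb lam ℓ * gb ((lam:ℝ) - 1/2 - ℓ) t)

lemma hnu_ge {lam ℓ : ℕ} (h : ℓ ≤ lam) : -(1/2 : ℝ) ≤ (lam:ℝ) - 1/2 - ℓ := by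
  have : (ℓ:ℝ) ≤ (lam:ℝ) := by exact_mod_cast h
  linarith

lemma dop_FF (lam : ℕ) {s t : ℝ} (ht : 0 < t) : dop (FF lam) s t = FF (lam+1) s t := by
  have hds : HasDerivAt (fun u => FF lam u t)
      (Real.sqrt (π/2) * ∑ ℓ ∈ Finset.range (lam+1),
        ((lam - 2*ℓ : ℕ):ℝ) * s ^ (lam - 2*ℓ - 1) * (bb lam ℓ * gb ((lam:ℝ) - 1/2 - ℓ) t)) s := by
    apply HasDerivAt.const_mul
    apply HasDerivAt.fun_sum
    intro ℓ _
    exact (hasDerivAt_pow (lam - 2*ℓ) s).mul_const _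
  have hdt : HasDerivAt (fun u => FF lam s u)
      (Real.sqrt (π/2) * ∑ ℓ ∈ Finset.range (lam+1),
        s ^ (lam - 2*ℓ) * (bb lam ℓ * (-t * gb ((lam:ℝ) - 1/2 - ℓ + 1) t))) t := by
    apply HasDerivAt.const_mul
    apply HasDerivAt.fun_sum
    intro ℓ hℓ
    have hν : -(1/2 : ℝ) ≤ (lam:ℝ) - 1/2 - ℓ := hnu_ge (by
      simpa using Finset.mem_range_succ_iff.mp hℓ)
    exact ((hasDerivAt_gb hν ht).const_mul (bb lam ℓ)).const_mul _
  rw [dop, hds.deriv, hdt.deriv, FF]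
  have ht' : t ≠ 0 := ht.ne'
  set A : ℕ → ℝ := fun ℓ =>
    ((lam - 2*ℓ : ℕ):ℝ) * s ^ (lam - 2*ℓ - 1) * (bb lam ℓ * gb ((lam:ℝ) - 1/2 - ℓ) t) with hA
  set B : ℕ → ℝ := fun ℓ =>
    s * s ^ (lam - 2*ℓ) * (bb lam ℓ * gb ((lam:ℝ) - 1/2 - ℓ + 1) t) with hB
  set f : ℕ → ℝ := fun ℓ =>
    s ^ (lam + 1 - 2*ℓ) * (bb (lam+1) ℓ * gb (((lam+1 : ℕ):ℝ) - 1/2 - ℓ) t) with hf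
  have key : ∑ ℓ ∈ Finset.range (lam+1), (A ℓ + B ℓ) = ∑ ℓ ∈ Finset.range (lam+2), f ℓ := by
    rw [Finset.sum_add_distrib, Finset.sum_range_succ' f (lam+1),
      Finset.sum_range_succ' B lam]
    have hext : ∑ ℓ ∈ Finset.range (lam+1), B (ℓ+1) = ∑ ℓ ∈ Finset.range lam, B (ℓ+1) := by
      rw [Finset.sum_range_succ]
      have hz : bb lam (lam+1) = 0 := bb_big (by omega)
      simp [hB, hz]
    rw [← hext, ← add_assoc, ← Finset.sum_add_distrib]
    have hterm : ∀ ℓ ∈ Finset.range (lam+1), A ℓ + B (ℓ+1) = f (ℓ+1) := by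
      intro ℓ _
      simp only [hA, hB, hf]
      rw [bb_succ lam ℓ]
      have harg1 : ((lam+1 : ℕ):ℝ) - 1/2 - ((ℓ+1 : ℕ):ℝ) = (lam:ℝ) - 1/2 - ℓ := by
        push_cast; ring
      have harg2 : ((lam:ℝ)) - 1/2 - ((ℓ+1 : ℕ):ℝ) + 1 = (lam:ℝ) - 1/2 - ℓ := by
        push_cast; ring
      rw [harg1, harg2]
      rcases Nat.lt_or_ge lam (2*ℓ+2) with h | h
      · have hz : bb lam (ℓ+1) = 0 := bb_big (by omega)
        rw [hz]
        have e : lam + 1 - 2*(ℓ+1) = lam - 2*ℓ - 1 := by omega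
        rw [e]
        ring
      · have e1 : lam + 1 - 2*(ℓ+1) = lam - 2*(ℓ+1) + 1 := by omega
        have e2 : lam - 2*ℓ - 1 = lam - 2*(ℓ+1) + 1 := by omega
        rw [e1, e2, pow_succ]
        ring
    rw [Finset.sum_congr rfl hterm]
    congr 1
    -- B 0 = f 0
    simp only [hB, hf, bb_zero, Nat.cast_zero, Nat.mul_zero, Nat.sub_zero]
    have harg : ((lam+1 : ℕ):ℝ) - 1/2 - (0:ℝ) = (lam:ℝ) - 1/2 - (0:ℝ) + 1 := by
      push_cast; ring
    rw [harg, pow_succ]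
    ring
  have expand : ∀ x y : ℝ, Real.sqrt (π/2) * x - s/t * (Real.sqrt (π/2) * y) =
      Real.sqrt (π/2) * (x - s/t * y) := by intro x y; ring
  rw [expand, Finset.mul_sum, ← Finset.sum_sub_distrib]
  have hAB : ∀ ℓ ∈ Finset.range (lam+1),
      A ℓ - s/t * (s ^ (lam - 2*ℓ) * (bb lam ℓ * (-t * gb ((lam:ℝ) - 1/2 - ℓ + 1) t)))
      = A ℓ + B ℓ := by
    intro ℓ _
    simp only [hB]
    field_simp
    ring
  rw [Finset.sum_congr rfl hAB, key]

lemma main_eq (lam : ℕ) : ∀ s t : ℝ, 0 < t →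
    (dop^[lam] (fun _ u => Real.cos u)) s t = FF lam s t := by
  induction lam with
  | zero =>
    intro s t ht
    simp only [Function.iterate_zero, id_eq]
    rw [FF]
    rw [Finset.sum_range_one]
    rw [bb_zero]
    have harg : ((0:ℕ):ℝ) - 1/2 - ((0:ℕ):ℝ) = -(1/2) := by norm_num
    rw [harg]
    simp [cos_eq_gb ht]
  | succ k ih =>
    intro s t ht
    rw [Function.iterate_succ_apply']
    have h1 : deriv (fun u => (dop^[k] (fun _ u => Real.cos u)) u t) s
        = deriv (fun u => FF k u t) s := by
      congr 1
      funext u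
      exact ih u t ht
    have h2 : deriv (fun u => (dop^[k] (fun _ u => Real.cos u)) s u) t
        = deriv (fun u => FF k s u) t := by
      apply Filter.EventuallyEq.deriv_eq
      filter_upwards [isOpen_Ioi.mem_nhds ht] with u hu
      exact ih s u hu
    have h3 := dop_FF k (s := s) ht
    rw [dop] at h3 ⊢
    rw [h1, h2, h3]

/-- For `λ = (m−2)/2` with `m` even, `m ≥ 2`, and `s, t > 0`:
`(∂_s − (s/t)∂_t)^λ cos(t) = √(π/2)·Σ_{ℓ=0}^{⌊λ/2⌋} s^{λ−2ℓ}·(1/(2^ℓ ℓ!))·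
(Γ(λ+1)/Γ(λ+1−2ℓ))·J_{λ−1/2−ℓ}(t)/t^{λ−1/2−ℓ}`. -/
theorem stmt18 (m : ℕ) (hm : Even m) (hm2 : 2 ≤ m) (lam : ℕ) (hlam : m = 2 * lam + 2)
    (s t : ℝ) (hs : 0 < s) (ht : 0 < t) :
    (dop^[lam] (fun _ u => Real.cos u)) s t =
      Real.sqrt (Real.pi / 2) * ∑ ℓ ∈ Finset.range (lam / 2 + 1),
        s ^ (lam - 2 * ℓ) * (1 / ((2 : ℝ) ^ ℓ * (Nat.factorial ℓ : ℝ))) *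
          (Real.Gamma ((lam : ℝ) + 1) / Real.Gamma ((lam : ℝ) + 1 - 2 * ℓ)) *
          (besselJ ((lam : ℝ) - 1/2 - ℓ) t / t ^ ((lam : ℝ) - 1/2 - ℓ)) := by
  rw [main_eq lam s t ht, FF]
  congr 1
  rw [← Finset.sum_subset (Finset.range_subset_range.mpr (by omega : lam/2 + 1 ≤ lam + 1))
    (fun x _ hx => ?_)]
  · apply Finset.sum_congr rfl
    intro ℓ hℓ
    have hℓ2 : 2*ℓ ≤ lam := by
      have := Finset.mem_range.mp hℓ
      omega
    rw [gb, bb, if_pos hℓ2]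
    have hΓ1 : Real.Gamma ((lam:ℝ) + 1) = lam.factorial := Real.Gamma_nat_eq_factorial lam
    have hΓ2 : Real.Gamma ((lam:ℝ) + 1 - 2*ℓ) = (lam - 2*ℓ).factorial := by
      have e : (lam:ℝ) + 1 - 2*ℓ = ((lam - 2*ℓ : ℕ):ℝ) + 1 := by
        push_cast [Nat.cast_sub hℓ2]
        ring
      rw [e, Real.Gamma_nat_eq_factorial]
    rw [hΓ1, hΓ2]
    ring
  · -- terms with lam/2+1 ≤ x are zero
    have hx2 : lam < 2*x := by
      have := Finset.mem_range.not.mp hx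
      omega
    rw [bb_big hx2]
    ring
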